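/- Let $\alpha = \alpha_2/\alpha_1 \in (0,1]$ and let $b_1, b_2 : [0,1] \to \mathbb{R}_{\ge 0}$ be nondecreasing quantile functions. Then for any power functions $\hat P_1, \hat P_2 : [0,1] \to \mathbb{R}_{\ge 0}$ satisfying $\alpha_2 \hat P_2(x) \ge 2^{2 b_2(x)} - 1$ for all $x$, and $\alpha_2 \hat P_2(v + 1 - \alpha) + \alpha_1 \hat P_1(v/\alpha) \ge 2^{2(b_2(v+1-\alpha) + b_1(v/\alpha))} - 1$ for $v \in [0,\alpha]$, we have $\int_0^1 \hat P_1(x)\,dx + \int_0^1 \hat P_2(x)\,dx \ge \int_0^{1-\alpha} \frac{2^{2 b_2(x)}-1}{\alpha_2}\,dx + \int_0^{\alpha} \frac{2^{2(b_2(v+1-\alpha)+b_1(v/\alpha))}-1}{\alpha_2}\,dv$. -/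

import Mathlib

open intervalIntegral

theorem sum_power_lower_bound
    (α1 α2 : ℝ) (hα2 : 0 < α2) (hα12 : α2 ≤ α1)
    (b1 b2 P1hat P2hat : ℝ → ℝ)
    (hb1mono : MonotoneOn b1 (Set.Icc 0 1)) (hb2mono : MonotoneOn b2 (Set.Icc 0 1))
    (hb1nn : ∀ x ∈ Set.Icc (0:ℝ) 1, 0 ≤ b1 x) (hb2nn : ∀ x ∈ Set.Icc (0:ℝ) 1, 0 ≤ b2 x)
    (hP1nn : ∀ x ∈ Set.Icc (0:ℝ) 1, 0 ≤ P1hat x) (hP2nn : ∀ x ∈ Set.Icc (0:ℝ) 1, 0 ≤ P2hat x)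
    (hP1int : IntervalIntegrable P1hat MeasureTheory.volume 0 1)
    (hP2int : IntervalIntegrable P2hat MeasureTheory.volume 0 1)
    (hRHS1int : IntervalIntegrable (fun x => ((2:ℝ) ^ (2 * b2 x) - 1) / α2)
      MeasureTheory.volume 0 (1 - α2 / α1))
    (hRHS2int : IntervalIntegrable
      (fun v => ((2:ℝ) ^ (2 * (b2 (v + 1 - α2 / α1) + b1 (v / (α2 / α1)))) - 1) / α2)
      MeasureTheory.volume 0 (α2 / α1))
    (hsingle : ∀ x ∈ Set.Icc (0:ℝ) 1, α2 * P2hat x ≥ (2:ℝ) ^ (2 * b2 x) - 1)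
    (hjoint : ∀ v ∈ Set.Icc (0:ℝ) (α2 / α1),
      α2 * P2hat (v + 1 - α2 / α1) + α1 * P1hat (v / (α2 / α1))
        ≥ (2:ℝ) ^ (2 * (b2 (v + 1 - α2 / α1) + b1 (v / (α2 / α1)))) - 1) :
    (∫ x in (0:ℝ)..1, P1hat x) + (∫ x in (0:ℝ)..1, P2hat x)
      ≥ (∫ x in (0:ℝ)..(1 - α2 / α1), ((2:ℝ) ^ (2 * b2 x) - 1) / α2)
        + ∫ v in (0:ℝ)..(α2 / α1),
            ((2:ℝ) ^ (2 * (b2 (v + 1 - α2 / α1) + b1 (v / (α2 / α1)))) - 1) / α2 := by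
  have hα1 : (0:ℝ) < α1 := lt_of_lt_of_le hα2 hα12
  set a : ℝ := α2 / α1 with ha_def
  have ha0 : 0 < a := div_pos hα2 hα1
  have ha1 : a ≤ 1 := (div_le_one hα1).2 hα12
  have hane : a ≠ 0 := ne_of_gt ha0
  -- integrabilities on subintervals
  have hP2sub1 : IntervalIntegrable P2hat MeasureTheory.volume 0 (1 - a) := by
    apply hP2int.mono_set
    rw [Set.uIcc_of_le (by linarith), Set.uIcc_of_le (by norm_num)]
    exact Set.Icc_subset_Icc le_rfl (by linarith)
  have hP2sub2 : IntervalIntegrable P2hat MeasureTheory.volume (1 - a) 1 := by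
    apply hP2int.mono_set
    rw [Set.uIcc_of_le (by linarith), Set.uIcc_of_le (by norm_num)]
    exact Set.Icc_subset_Icc (by linarith) le_rfl
  have hg2int : IntervalIntegrable (fun v => P2hat (v + (1 - a)))
      MeasureTheory.volume 0 a := by
    have := hP2sub2.comp_add_right (1 - a)
    simpa using this
  have hg1int : IntervalIntegrable (fun v => P1hat (v / a)) MeasureTheory.volume 0 a := by
    have := hP1int.comp_mul_right (c := a⁻¹)
    simpa [div_eq_mul_inv, one_div] using this
  -- Step A
  have hA : (∫ x in (0:ℝ)..(1 - a), ((2:ℝ) ^ (2 * b2 x) - 1) / α2)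
      ≤ ∫ x in (0:ℝ)..(1 - a), P2hat x := by
    apply intervalIntegral.integral_mono_on (by linarith) hRHS1int hP2sub1
    intro x hx
    have hx1 : x ∈ Set.Icc (0:ℝ) 1 := ⟨hx.1, le_trans hx.2 (by linarith)⟩
    have h := hsingle x hx1
    rw [div_le_iff₀ hα2]
    have := mul_comm α2 (P2hat x)
    linarith
  -- Step B
  have hB : (∫ v in (0:ℝ)..a, ((2:ℝ) ^ (2 * (b2 (v + 1 - a) + b1 (v / a))) - 1) / α2)
      ≤ ∫ v in (0:ℝ)..a, (P2hat (v + (1 - a)) + (α1 / α2) * P1hat (v / a)) := by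
    apply intervalIntegral.integral_mono_on ha0.le hRHS2int
      (hg2int.add (hg1int.const_mul _))
    intro v hv
    have h := hjoint v hv
    have hv1a : v + (1 - a) = v + 1 - a := by ring
    rw [hv1a, div_le_iff₀ hα2]
    have hY : (P2hat (v + 1 - a) + (α1 / α2) * P1hat (v / a)) * α2
        = α2 * P2hat (v + 1 - a) + α1 * P1hat (v / a) := by
      field_simp
    linarith
  -- Step C: rewrite the comparison integral
  have hC2 : (∫ v in (0:ℝ)..a, P2hat (v + (1 - a))) = ∫ x in (1 - a : ℝ)..1, P2hat x := by
    rw [intervalIntegral.integral_comp_add_right]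
    norm_num
  have hC1 : (∫ v in (0:ℝ)..a, (α1 / α2) * P1hat (v / a)) = ∫ x in (0:ℝ)..1, P1hat x := by
    rw [intervalIntegral.integral_const_mul, intervalIntegral.integral_comp_div _ hane,
      zero_div, div_self hane, smul_eq_mul, ha_def]
    field_simp
  have hsplit : (∫ v in (0:ℝ)..a, (P2hat (v + (1 - a)) + (α1 / α2) * P1hat (v / a)))
      = (∫ v in (0:ℝ)..a, P2hat (v + (1 - a)))
        + ∫ v in (0:ℝ)..a, (α1 / α2) * P1hat (v / a) :=
    intervalIntegral.integral_add hg2int (hg1int.const_mul _)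
  -- Step D
  have hD : (∫ x in (0:ℝ)..(1 - a), P2hat x) + ∫ x in (1 - a : ℝ)..1, P2hat x
      = ∫ x in (0:ℝ)..1, P2hat x :=
    intervalIntegral.integral_add_adjacent_intervals hP2sub1 hP2sub2
  rw [hsplit, hC1, hC2] at hB
  linarith
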